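/- arXiv:1801.01594 — 2 statements merged into one kernel-verified Lean document; each statement's English description precedes it below -/
import Mathlib

section
/- The Gaussian mechanism M(d) = f(d) + N(0, σ²) applied to a real-valued function f with ℓ₂-sensitivity Δf satisfies (ε, δ)-differential privacy for any ε ∈ (0,1), provided σ ≥ Δf · √(2 ln(1.25/δ)) / ε. -/
open MeasureTheory

namespace GaussMechAux

open Real Set ProbabilityTheory NNReal ENNReal

lemma gaussianPDFReal_eq' (σ : ℝ) (hσ : 0 < σ) (m x : ℝ) :
    gaussianPDFReal m ((σ^2).toNNReal) x
      = (Real.sqrt (2*π) * σ)⁻¹ * Real.exp (-(x-m)^2/(2*σ^2)) := by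
  rw [gaussianPDFReal]
  have h1 : ((σ^2).toNNReal : ℝ) = σ^2 := Real.coe_toNNReal _ (sq_nonneg σ)
  rw [h1]
  have h2 : Real.sqrt (2*π*σ^2) = Real.sqrt (2*π) * σ := by
    rw [Real.sqrt_mul (by positivity), Real.sqrt_sq hσ.le]
  rw [h2]

lemma gaussianPDFReal_centered_eq (σ : ℝ) (hσ : 0 < σ) (x : ℝ) :
    gaussianPDFReal 0 ((σ^2).toNNReal) x
      = (Real.sqrt (2*π) * σ)⁻¹ * Real.exp (-x^2/(2*σ^2)) := by
  simpa using gaussianPDFReal_eq' σ hσ 0 x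

lemma integral_x_mul_exp_Ioi (σ T : ℝ) (hσ : 0 < σ) :
    ∫ x in Set.Ioi T, x * Real.exp (-x^2 / (2*σ^2)) = σ^2 * Real.exp (-T^2/(2*σ^2)) := by
  have hσ2 : 0 < σ^2 := by positivity
  have hb : 0 < (2*σ^2)⁻¹ := by positivity
  have hform : ∀ x : ℝ, -x^2/(2*σ^2) = -((2*σ^2)⁻¹ * x^2) := by intro x; field_simp
  have hderiv : ∀ x ∈ Set.Ioi T, HasDerivAt (fun x => -σ^2 * Real.exp (-x^2/(2*σ^2)))
      (x * Real.exp (-x^2/(2*σ^2))) x := by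
    intro x _
    have h1 : HasDerivAt (fun x : ℝ => -x^2/(2*σ^2)) (-x/σ^2) x := by
      have := ((hasDerivAt_pow 2 x).neg).div_const (2*σ^2)
      refine this.congr_deriv ?_
      field_simp
      ring
    have h2 := (Real.hasDerivAt_exp _).comp x h1
    have h3 := h2.const_mul (-σ^2)
    refine h3.congr_deriv ?_
    field_simp
  have hint : IntegrableOn (fun x => x * Real.exp (-x^2/(2*σ^2))) (Set.Ioi T) := by
    have := integrable_mul_exp_neg_mul_sq hb
    refine (this.congr ?_).integrableOn
    filter_upwards with x
    rw [hform x, neg_mul]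
  have htend : Filter.Tendsto (fun x => -σ^2 * Real.exp (-x^2/(2*σ^2))) Filter.atTop (nhds 0) := by
    have h1 : Filter.Tendsto (fun x : ℝ => -x^2/(2*σ^2)) Filter.atTop Filter.atBot := by
      simp_rw [div_eq_mul_inv, neg_mul]
      apply Filter.tendsto_neg_atBot_iff.mpr
      exact (Filter.tendsto_pow_atTop (two_ne_zero)).atTop_mul_const hb
    have h2 := Real.tendsto_exp_atBot.comp h1
    have := h2.const_mul (-σ^2)
    simpa using this
  have hcont : ContinuousWithinAt (fun x => -σ^2 * Real.exp (-x^2/(2*σ^2))) (Set.Ici T) T := by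
    apply Continuous.continuousWithinAt
    continuity
  rw [MeasureTheory.integral_Ioi_of_hasDerivAt_of_tendsto hcont hderiv hint htend]
  norm_num

lemma gauss_tail_pos (σ T : ℝ) (hσ : 0 < σ) (hT : 0 < T) :
    ∫ x in Set.Ioi T, gaussianPDFReal 0 ((σ^2).toNNReal) x
      ≤ σ / (Real.sqrt (2*π) * T) * Real.exp (-T^2/(2*σ^2)) := by
  have hc : (0:ℝ) < (Real.sqrt (2*π) * σ)⁻¹ := by
    have : (0:ℝ) < Real.sqrt (2*π) := Real.sqrt_pos.mpr (by positivity)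
    positivity
  have hb : 0 < (2*σ^2)⁻¹ := by positivity
  have hform : ∀ x : ℝ, -x^2/(2*σ^2) = -((2*σ^2)⁻¹ * x^2) := by intro x; field_simp
  have hint : IntegrableOn (fun x => (Real.sqrt (2*π) * σ)⁻¹ * T⁻¹ *
      (x * Real.exp (-x^2/(2*σ^2)))) (Set.Ioi T) := by
    have := integrable_mul_exp_neg_mul_sq hb
    refine (Integrable.const_mul (this.congr ?_) _).integrableOn
    filter_upwards with x
    rw [hform x, neg_mul]
  have hle : ∫ x in Set.Ioi T, gaussianPDFReal 0 ((σ^2).toNNReal) x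
      ≤ ∫ x in Set.Ioi T, (Real.sqrt (2*π) * σ)⁻¹ * T⁻¹ * (x * Real.exp (-x^2/(2*σ^2))) := by
    refine setIntegral_mono_on (integrable_gaussianPDFReal _ _).integrableOn hint
      measurableSet_Ioi ?_
    intro x hx
    rw [gaussianPDFReal_centered_eq σ hσ x]
    rw [Set.mem_Ioi] at hx
    have hx0 : 0 < x := hT.trans hx
    have h1 : (1:ℝ) ≤ T⁻¹ * x := by
      rw [← div_eq_inv_mul]
      exact (one_le_div hT).mpr hx.le
    calc (Real.sqrt (2*π) * σ)⁻¹ * Real.exp (-x^2/(2*σ^2))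
        = (Real.sqrt (2*π) * σ)⁻¹ * (1 * Real.exp (-x^2/(2*σ^2))) := by ring
      _ ≤ (Real.sqrt (2*π) * σ)⁻¹ * ((T⁻¹ * x) * Real.exp (-x^2/(2*σ^2))) := by
          apply mul_le_mul_of_nonneg_left _ hc.le
          apply mul_le_mul_of_nonneg_right h1 (Real.exp_nonneg _)
      _ = (Real.sqrt (2*π) * σ)⁻¹ * T⁻¹ * (x * Real.exp (-x^2/(2*σ^2))) := by ring
  refine hle.trans ?_
  rw [MeasureTheory.integral_const_mul, integral_x_mul_exp_Ioi σ T hσ]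
  have hs : (0:ℝ) < Real.sqrt (2*π) := Real.sqrt_pos.mpr (by positivity)
  apply le_of_eq
  field_simp

lemma gauss_tail_half (σ : ℝ) (hσ : 0 < σ) :
    ∫ x in Set.Ioi (0:ℝ), gaussianPDFReal 0 ((σ^2).toNNReal) x ≤ 1/2 := by
  set v := (σ^2).toNNReal with hv
  have hv0 : v ≠ 0 := by
    simp [hv, Real.toNNReal_eq_zero, not_le]
    positivity
  have heven : ∀ x : ℝ, gaussianPDFReal 0 v (-x) = gaussianPDFReal 0 v x := by
    intro x
    rw [gaussianPDFReal, gaussianPDFReal]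
    norm_num
  have h1 : ∫ x in Set.Iic (0:ℝ), gaussianPDFReal 0 v x
      = ∫ x in Set.Ioi (0:ℝ), gaussianPDFReal 0 v x := by
    have h0 := integral_comp_neg_Ioi (0:ℝ) (gaussianPDFReal 0 v)
    simp only [neg_zero] at h0
    rw [← h0]
    simp_rw [heven]
  have h2 : (∫ x in Set.Iic (0:ℝ), gaussianPDFReal 0 v x)
      + ∫ x in Set.Ioi (0:ℝ), gaussianPDFReal 0 v x = 1 := by
    rw [intervalIntegral.integral_Iic_add_Ioi (integrable_gaussianPDFReal 0 v).integrableOn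
      (integrable_gaussianPDFReal 0 v).integrableOn]
    exact integral_gaussianPDFReal_eq_one 0 hv0
  rw [h1] at h2
  linarith

lemma gauss_tail_neg (σ T : ℝ) (hσ : 0 < σ) (hT : T ≤ 0) :
    ∫ x in Set.Ioi T, gaussianPDFReal 0 ((σ^2).toNNReal) x
      ≤ 1/2 + (-T) * (Real.sqrt (2*π) * σ)⁻¹ := by
  set v := (σ^2).toNNReal with hv
  have hs : (0:ℝ) < Real.sqrt (2*π) := Real.sqrt_pos.mpr (by positivity)
  have hsplit : ∫ x in Set.Ioi T, gaussianPDFReal 0 v x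
      = (∫ x in Set.Ioc T 0, gaussianPDFReal 0 v x)
        + ∫ x in Set.Ioi (0:ℝ), gaussianPDFReal 0 v x := by
    rw [← MeasureTheory.setIntegral_union (Set.Ioc_disjoint_Ioi le_rfl) measurableSet_Ioi
      (integrable_gaussianPDFReal 0 v).integrableOn (integrable_gaussianPDFReal 0 v).integrableOn]
    rw [Set.Ioc_union_Ioi_eq_Ioi hT]
  have hbound : ∫ x in Set.Ioc T 0, gaussianPDFReal 0 v x
      ≤ (-T) * (Real.sqrt (2*π) * σ)⁻¹ := by
    have hle : ∀ x ∈ Set.Ioc T 0, gaussianPDFReal 0 v x ≤ (Real.sqrt (2*π) * σ)⁻¹ := by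
      intro x _
      rw [hv, gaussianPDFReal_centered_eq σ hσ x]
      calc (Real.sqrt (2*π) * σ)⁻¹ * Real.exp (-x^2/(2*σ^2))
          ≤ (Real.sqrt (2*π) * σ)⁻¹ * 1 := by
            apply mul_le_mul_of_nonneg_left _ (by positivity)
            rw [Real.exp_le_one_iff]
            have : (0:ℝ) ≤ x^2/(2*σ^2) := by positivity
            rw [neg_div]
            linarith
        _ = (Real.sqrt (2*π) * σ)⁻¹ := mul_one _
    calc ∫ x in Set.Ioc T 0, gaussianPDFReal 0 v x
        ≤ ∫ _x in Set.Ioc T 0, (Real.sqrt (2*π) * σ)⁻¹ := by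
          refine setIntegral_mono_on (integrable_gaussianPDFReal 0 v).integrableOn
            (integrableOn_const ?_) measurableSet_Ioc hle
          exact measure_Ioc_lt_top.ne
      _ = (0 - T) * (Real.sqrt (2*π) * σ)⁻¹ := by
          rw [setIntegral_const, smul_eq_mul, Real.volume_real_Ioc_of_le hT]
      _ = (-T) * (Real.sqrt (2*π) * σ)⁻¹ := by ring
  rw [hsplit]
  have := gauss_tail_half σ hσ
  rw [← hv] at this
  linarith

lemma tail_mono_set (σ : ℝ) (a b : ℝ) (hab : a ≤ b) :
    ∫ x in Set.Ioi b, gaussianPDFReal 0 ((σ^2).toNNReal) x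
      ≤ ∫ x in Set.Ioi a, gaussianPDFReal 0 ((σ^2).toNNReal) x := by
  refine setIntegral_mono_set (integrable_gaussianPDFReal _ _).integrableOn
    (ae_of_all _ (gaussianPDFReal_nonneg _ _)) (HasSubset.Subset.eventuallyLE ?_)
  exact Set.Ioi_subset_Ioi hab

lemma sqrt_two_pi_ge : Real.sqrt (2*π) ≥ 2.5 := by
  rw [ge_iff_le, show (2.5:ℝ) = Real.sqrt (2.5^2) by rw [Real.sqrt_sq (by norm_num)]]
  apply Real.sqrt_le_sqrt
  nlinarith [Real.pi_gt_d6]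

set_option maxHeartbeats 2000000 in
lemma tail_le_delta (σ ε δ Δ : ℝ) (hσ0 : 0 < σ) (hε0 : 0 < ε) (hε1 : ε < 1)
    (hδ0 : 0 < δ) (hδ1 : δ < 1) (hΔ : 0 < Δ)
    (hσ : σ ≥ Δ * Real.sqrt (2 * Real.log (1.25 / δ)) / ε) :
    ∫ x in Set.Ioi (σ^2*ε/Δ - Δ/2), gaussianPDFReal 0 ((σ^2).toNNReal) x ≤ δ := by
  obtain ⟨L, hLdef⟩ : ∃ x, x = Real.log (1.25 / δ) := ⟨_, rfl⟩
  rw [← hLdef] at hσ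
  have hratio : (1:ℝ) < 1.25 / δ := by
    rw [lt_div_iff₀ hδ0]; linarith
  have hL : 0 < L := hLdef ▸ Real.log_pos hratio
  obtain ⟨c, hcdef⟩ : ∃ x, x = Real.sqrt (2 * L) := ⟨_, rfl⟩
  rw [← hcdef] at hσ
  have hc : 0 < c := hcdef ▸ Real.sqrt_pos.mpr (by linarith)
  have hc2 : c^2 = 2 * L := hcdef ▸ Real.sq_sqrt (by linarith)
  have hexpc : Real.exp (-(c^2)/2) = δ / 1.25 := by
    rw [hc2]
    have : -(2*L)/2 = -L := by ring
    rw [this, hLdef, Real.exp_neg, Real.exp_log (by linarith : (0:ℝ) < 1.25/δ)]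
    rw [inv_div]
  obtain ⟨T, hTdef⟩ : ∃ x, x = σ^2*ε/Δ - Δ/2 := ⟨_, rfl⟩
  rw [← hTdef]
  have hσc : c ≤ σ * ε / Δ := by
    rw [ge_iff_le, div_le_iff₀ hε0] at hσ
    rw [le_div_iff₀ hΔ]
    nlinarith
  obtain ⟨s, hsdef⟩ : ∃ x, x = σ * ε / Δ := ⟨_, rfl⟩
  rw [← hsdef] at hσc
  have hs : 0 < s := by rw [hsdef]; positivity
  have hTs : T = σ * (s - ε/(2*s)) := by
    rw [hTdef, hsdef]
    rw [hsdef] at hs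
    field_simp
  obtain ⟨t, htdef⟩ : ∃ x, x = c - ε/(2*c) := ⟨_, rfl⟩
  have htT : σ * t ≤ T := by
    rw [hTs]
    apply mul_le_mul_of_nonneg_left _ hσ0.le
    rw [htdef]
    have key : ε/(2*c) - ε/(2*s) = ε*(s-c)/(2*c*s) := by field_simp
    have h1 : 0 ≤ ε*(s-c)/(2*c*s) := by
      apply div_nonneg _ (by positivity)
      apply mul_nonneg hε0.le (by linarith)
    linarith
  have hstep1 : ∫ x in Set.Ioi T, gaussianPDFReal 0 ((σ^2).toNNReal) x
      ≤ ∫ x in Set.Ioi (σ*t), gaussianPDFReal 0 ((σ^2).toNNReal) x :=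
    tail_mono_set σ _ _ htT
  by_cases hδhalf : δ ≤ 1/2
  · -- main case: δ ≤ 1/2, t is comfortably positive
    have hL6 : (0.6:ℝ) ≤ L := by
      have h25 : Real.log 2.5 ≤ L := by
        rw [hLdef]
        apply Real.log_le_log (by norm_num)
        rw [le_div_iff₀ hδ0]; linarith
      have := Real.one_sub_inv_le_log_of_pos (show (0:ℝ) < 2.5 by norm_num)
      norm_num at this
      linarith
    have hc109 : (1.09:ℝ) ≤ c := by
      nlinarith
    have ht63 : (0.63:ℝ) ≤ t := by
      have h1 : ε/(2*c) ≤ 1/(2*1.09) := by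
        apply div_le_div₀ (by norm_num) hε1.le (by norm_num) (by linarith)
      have h2 : (1:ℝ)/(2*1.09) ≤ 0.46 := by norm_num
      rw [htdef]
      linarith
    have htpos : 0 < t := lt_of_lt_of_le (by norm_num) ht63
    have hσt : 0 < σ * t := mul_pos hσ0 htpos
    have hstep2 := gauss_tail_pos σ (σ*t) hσ0 hσt
    have hsq : -(σ*t)^2/(2*σ^2) = -(t^2)/2 := by
      field_simp
    rw [hsq] at hstep2
    have hcoef : σ / (Real.sqrt (2*π) * (σ*t)) = 1 / (Real.sqrt (2*π) * t) := by
      field_simp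
    rw [hcoef] at hstep2
    have htsq : c^2 - ε ≤ t^2 := by
      have h2cu : 2*c*(ε/(2*c)) = ε := by field_simp
      have ht2 : t^2 = c^2 - 2*c*(ε/(2*c)) + (ε/(2*c))^2 := by rw [htdef]; ring
      nlinarith [sq_nonneg (ε/(2*c))]
    have hexp_le : Real.exp (-(t^2)/2) ≤ Real.exp (1/2) * (δ/1.25) := by
      have h1 : Real.exp (-(t^2)/2) ≤ Real.exp (-(c^2-ε)/2) := by
        apply Real.exp_le_exp.mpr
        linarith
      have h2 : Real.exp (-(c^2-ε)/2) = Real.exp (ε/2) * Real.exp (-(c^2)/2) := by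
        rw [← Real.exp_add]; ring_nf
      rw [h2, hexpc] at h1
      have h3 : Real.exp (ε/2) ≤ Real.exp (1/2) := Real.exp_le_exp.mpr (by linarith)
      have h4 : (0:ℝ) < δ/1.25 := by positivity
      nlinarith
    have hexphalf : Real.exp (1/2:ℝ) ≤ 1.65 := by
      have h := Real.exp_one_lt_d9.le
      have hsq2 : Real.exp (1/2:ℝ)^2 = Real.exp 1 := by
        rw [← Real.exp_nat_mul]
        norm_num
      nlinarith [Real.exp_pos (1/2:ℝ)]
    have hden : (2.5:ℝ) * 0.63 ≤ Real.sqrt (2*π) * t := by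
      have := sqrt_two_pi_ge
      nlinarith
    calc ∫ x in Set.Ioi T, gaussianPDFReal 0 ((σ^2).toNNReal) x
        ≤ 1 / (Real.sqrt (2*π) * t) * Real.exp (-(t^2)/2) := hstep1.trans hstep2
      _ ≤ 1 / (2.5 * 0.63) * (1.65 * (δ/1.25)) := by
          apply mul_le_mul
          · apply div_le_div₀ (by norm_num) le_rfl (by norm_num) hden
          · refine hexp_le.trans ?_
            have h4 : (0:ℝ) < δ/1.25 := by positivity
            nlinarith
          · exact Real.exp_nonneg _
          · norm_num
      _ ≤ δ := by
          have he : 1/(2.5*0.63) * (1.65*(δ/1.25)) = (1.65/(2.5*0.63*1.25))*δ := by ring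
          rw [he]
          nlinarith
  · -- δ > 1/2
    push_neg at hδhalf
    by_cases ht0 : 0 ≤ t
    · have h0T : (0:ℝ) ≤ T := le_trans (by positivity) htT
      have := (tail_mono_set σ 0 T h0T).trans (gauss_tail_half σ hσ0)
      linarith
    · push_neg at ht0
      have h2c2 : 2*c^2 < ε := by
        rw [htdef] at ht0
        have : c < ε/(2*c) := by linarith
        calc 2*c^2 = (2*c)*c := by ring
          _ < (2*c)*(ε/(2*c)) := by apply mul_lt_mul_of_pos_left this (by linarith)
          _ = ε := by field_simp
      have hL4 : L < 1/4 := by nlinarith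
      have hδbig : (0.97:ℝ) ≤ δ := by
        have h1 : Real.exp L < Real.exp (1/4) := Real.exp_lt_exp.mpr hL4
        rw [hLdef, Real.exp_log (by linarith : (0:ℝ) < 1.25/δ)] at h1
        have h2 : Real.exp (1/4:ℝ) ≤ 1.285 := by
          have h := Real.exp_one_lt_d9.le
          have hsq4 : Real.exp (1/4:ℝ)^4 = Real.exp 1 := by
            rw [← Real.exp_nat_mul]
            norm_num
          refine le_of_pow_le_pow_left₀ (n := 4) (by norm_num) (by norm_num) ?_
          rw [hsq4]
          refine h.trans (by norm_num)
        have h3 : 1.25/δ < 1.285 := lt_of_lt_of_le h1 h2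
        rw [div_lt_iff₀ hδ0] at h3
        linarith
      have hL2 : (0.2:ℝ) ≤ L := by
        have h25 : Real.log 1.25 ≤ L := by
          rw [hLdef]
          apply Real.log_le_log (by norm_num)
          rw [le_div_iff₀ hδ0]; linarith
        have := Real.one_sub_inv_le_log_of_pos (show (0:ℝ) < 1.25 by norm_num)
        norm_num at this
        linarith
      have hc63 : (0.63:ℝ) ≤ c := by nlinarith
      have hnt : -t ≤ 0.794 := by
        rw [htdef]
        have : ε/(2*c) ≤ 1/(2*0.63) := by
          apply div_le_div₀ (by norm_num) hε1.le (by norm_num)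
          linarith
        have : ε/(2*c) ≤ 0.794 := by linarith [this]
        linarith
      have hstep2 := gauss_tail_neg σ (σ*t) hσ0 (by nlinarith)
      have hval : (-(σ*t)) * (Real.sqrt (2*π) * σ)⁻¹ = (-t) / Real.sqrt (2*π) := by
        have hs2 : (0:ℝ) < Real.sqrt (2*π) := by linarith [sqrt_two_pi_ge]
        field_simp
      rw [hval] at hstep2
      have hfin : (-t) / Real.sqrt (2*π) ≤ 0.794/2.5 := by
        apply div_le_div₀ (by norm_num) hnt (by norm_num) sqrt_two_pi_ge
      calc ∫ x in Set.Ioi T, gaussianPDFReal 0 ((σ^2).toNNReal) x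
          ≤ 1/2 + (-t)/Real.sqrt (2*π) := hstep1.trans hstep2
        _ ≤ 1/2 + 0.794/2.5 := by linarith
        _ ≤ δ := by norm_num; linarith

lemma gauss_split (m₁ m₂ : ℝ) (v : ℝ≥0) (hv : v ≠ 0) (ε : ℝ) (S : Set ℝ) :
    gaussianReal m₁ v S ≤ ENNReal.ofReal (Real.exp ε) * gaussianReal m₂ v S
      + gaussianReal m₁ v {x | Real.exp ε * gaussianPDFReal m₂ v x < gaussianPDFReal m₁ v x} := by
  set B := {x | Real.exp ε * gaussianPDFReal m₂ v x < gaussianPDFReal m₁ v x} with hBdef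
  have hB : MeasurableSet B :=
    measurableSet_lt (measurable_const.mul (measurable_gaussianPDFReal _ _))
      (measurable_gaussianPDFReal _ _)
  rw [gaussianReal_apply _ hv S]
  have hsplit : S = (S \ B) ∪ (S ∩ B) := by
    rw [Set.union_comm, Set.inter_union_diff]
  calc ∫⁻ x in S, gaussianPDF m₁ v x
      ≤ (∫⁻ x in S \ B, gaussianPDF m₁ v x) + ∫⁻ x in S ∩ B, gaussianPDF m₁ v x := by
        conv_lhs => rw [hsplit]
        exact lintegral_union_le _ _ _
    _ ≤ ENNReal.ofReal (Real.exp ε) * gaussianReal m₂ v S + gaussianReal m₁ v B := by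
        apply add_le_add
        · calc ∫⁻ x in S \ B, gaussianPDF m₁ v x
              ≤ ∫⁻ x in S \ B, ENNReal.ofReal (Real.exp ε) * gaussianPDF m₂ v x := by
                apply setLIntegral_mono ((measurable_gaussianPDF _ _).const_mul _)
                intro x hx
                have hxB : x ∉ B := hx.2
                rw [hBdef, Set.mem_setOf_eq, not_lt] at hxB
                rw [gaussianPDF, gaussianPDF, ← ENNReal.ofReal_mul (Real.exp_nonneg ε)]
                exact ENNReal.ofReal_le_ofReal hxB
            _ = ENNReal.ofReal (Real.exp ε) * ∫⁻ x in S \ B, gaussianPDF m₂ v x := by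
                rw [lintegral_const_mul _ (measurable_gaussianPDF _ _)]
            _ ≤ ENNReal.ofReal (Real.exp ε) * gaussianReal m₂ v S := by
                apply mul_le_mul_right
                rw [gaussianReal_apply _ hv S]
                exact lintegral_mono_set Set.diff_subset
        · rw [gaussianReal_apply _ hv B]
          exact lintegral_mono_set Set.inter_subset_right

lemma gauss_shift (m T : ℝ) (v : ℝ≥0) (hv : v ≠ 0) :
    gaussianReal m v (Set.Ioi (m + T)) = gaussianReal 0 v (Set.Ioi T) := by
  have h := gaussianReal_map_add_const (μ := 0) (v := v) m
  rw [zero_add] at h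
  rw [← h, Measure.map_apply (measurable_id'.add_const m) measurableSet_Ioi]
  congr 1
  ext x
  simp only [Set.mem_preimage, Set.mem_Ioi]
  constructor
  · intro hx; linarith
  · intro hx; linarith

lemma gauss_neg (T : ℝ) (v : ℝ≥0) (hv : v ≠ 0) :
    gaussianReal 0 v (Set.Iio (-T)) = gaussianReal 0 v (Set.Ioi T) := by
  have h := gaussianReal_map_const_mul (μ := 0) (v := v) (-1)
  have h1 : (NNReal.mk ((-1:ℝ)^2) (sq_nonneg _)) = 1 := by
    ext; norm_num
  rw [mul_zero, h1, one_mul] at h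
  conv_lhs => rw [← h]
  rw [Measure.map_apply (measurable_id'.const_mul (-1)) measurableSet_Iio]
  congr 1
  ext x
  simp only [Set.mem_preimage, Set.mem_Iio, Set.mem_Ioi]
  constructor
  · intro hx; linarith
  · intro hx; linarith

lemma gauss_shift_lower (m T : ℝ) (v : ℝ≥0) (hv : v ≠ 0) :
    gaussianReal m v (Set.Iio (m - T)) = gaussianReal 0 v (Set.Ioi T) := by
  have h := gaussianReal_map_add_const (μ := 0) (v := v) m
  rw [zero_add] at h
  rw [← h, Measure.map_apply (measurable_id'.add_const m) measurableSet_Iio]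
  rw [← gauss_neg T v hv]
  congr 1
  ext x
  simp only [Set.mem_preimage, Set.mem_Iio]
  constructor
  · intro hx; linarith
  · intro hx; linarith

lemma quad_of_mem_B (σ ε m₁ m₂ x : ℝ) (hσ : 0 < σ)
    (hx : Real.exp ε * gaussianPDFReal m₂ ((σ^2).toNNReal) x
        < gaussianPDFReal m₁ ((σ^2).toNNReal) x) :
    2*σ^2*ε < 2*(m₁-m₂)*(x-m₁) + (m₁-m₂)^2 := by
  rw [gaussianPDFReal_eq' σ hσ m₁ x, gaussianPDFReal_eq' σ hσ m₂ x] at hx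
  have hC : (0:ℝ) < (Real.sqrt (2*π) * σ)⁻¹ := by
    have : (0:ℝ) < Real.sqrt (2*π) := Real.sqrt_pos.mpr (by positivity)
    positivity
  have hx2 : Real.exp (ε + -(x-m₂)^2/(2*σ^2)) < Real.exp (-(x-m₁)^2/(2*σ^2)) := by
    rw [Real.exp_add]
    calc Real.exp ε * Real.exp (-(x-m₂)^2/(2*σ^2))
        = (Real.sqrt (2*π) * σ) * ((Real.sqrt (2*π) * σ)⁻¹ *
            (Real.exp ε * Real.exp (-(x-m₂)^2/(2*σ^2)))) := by
          field_simp
      _ < (Real.sqrt (2*π) * σ) * ((Real.sqrt (2*π) * σ)⁻¹ * Real.exp (-(x-m₁)^2/(2*σ^2))) := by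
          apply mul_lt_mul_of_pos_left _ (by positivity)
          calc (Real.sqrt (2*π) * σ)⁻¹ * (Real.exp ε * Real.exp (-(x-m₂)^2/(2*σ^2)))
              = Real.exp ε * ((Real.sqrt (2*π) * σ)⁻¹ * Real.exp (-(x-m₂)^2/(2*σ^2))) := by ring
            _ < (Real.sqrt (2*π) * σ)⁻¹ * Real.exp (-(x-m₁)^2/(2*σ^2)) := hx
      _ = Real.exp (-(x-m₁)^2/(2*σ^2)) := by field_simp
  have hlin := Real.exp_lt_exp.mp hx2
  have h2σ : (0:ℝ) < 2*σ^2 := by positivity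
  have quad : 2*σ^2*ε < (x-m₂)^2 - (x-m₁)^2 := by
    have e1 : (x-m₁)^2/(2*σ^2)*(2*σ^2) = (x-m₁)^2 := by field_simp
    have e2 : (x-m₂)^2/(2*σ^2)*(2*σ^2) = (x-m₂)^2 := by field_simp
    have := mul_lt_mul_of_pos_right hlin h2σ
    rw [add_mul] at this
    rw [neg_div, neg_mul, e2, neg_div, neg_mul, e1] at this
    linarith
  have hexpand : (x-m₂)^2 - (x-m₁)^2 = 2*(m₁-m₂)*(x-m₁) + (m₁-m₂)^2 := by ring
  linarith [hexpand ▸ quad]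

lemma B_subset_pos (σ ε Δ m₁ m₂ : ℝ) (hσ : 0 < σ) (hε : 0 < ε) (hlt : m₂ < m₁)
    (hΔ : |m₁ - m₂| ≤ Δ) :
    {x : ℝ | Real.exp ε * gaussianPDFReal m₂ ((σ^2).toNNReal) x
        < gaussianPDFReal m₁ ((σ^2).toNNReal) x}
      ⊆ Set.Ioi (m₁ + (σ^2*ε/Δ - Δ/2)) := by
  intro x hx
  have quad := quad_of_mem_B σ ε m₁ m₂ x hσ hx
  have hΔpos : 0 < Δ := lt_of_lt_of_le (abs_pos.mpr (sub_ne_zero.mpr hlt.ne')) hΔ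
  have hdiv : σ^2*ε/Δ*Δ = σ^2*ε := by field_simp
  have hu : (0:ℝ) ≤ σ^2*ε/Δ := by positivity
  rw [Set.mem_Ioi]
  have haΔ : m₁-m₂ ≤ Δ := le_trans (le_abs_self _) hΔ
  nlinarith [mul_nonneg (show (0:ℝ) ≤ Δ - (m₁-m₂) by linarith)
    (show (0:ℝ) ≤ (m₁-m₂) + 2*(σ^2*ε/Δ) by linarith)]

lemma B_subset_neg (σ ε Δ m₁ m₂ : ℝ) (hσ : 0 < σ) (hε : 0 < ε) (hlt : m₁ < m₂)
    (hΔ : |m₁ - m₂| ≤ Δ) :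
    {x : ℝ | Real.exp ε * gaussianPDFReal m₂ ((σ^2).toNNReal) x
        < gaussianPDFReal m₁ ((σ^2).toNNReal) x}
      ⊆ Set.Iio (m₁ - (σ^2*ε/Δ - Δ/2)) := by
  intro x hx
  have quad := quad_of_mem_B σ ε m₁ m₂ x hσ hx
  have hΔpos : 0 < Δ := lt_of_lt_of_le (abs_pos.mpr (sub_ne_zero.mpr hlt.ne)) hΔ
  have hdiv : σ^2*ε/Δ*Δ = σ^2*ε := by field_simp
  have hu : (0:ℝ) ≤ σ^2*ε/Δ := by positivity
  rw [Set.mem_Iio]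
  have haΔ : -(m₁-m₂) ≤ Δ := by
    have := abs_le.mp hΔ
    linarith [this.1]
  nlinarith [mul_nonneg (show (0:ℝ) ≤ Δ + (m₁-m₂) by linarith [(abs_le.mp hΔ).1])
    (show (0:ℝ) ≤ -(m₁-m₂) + 2*(σ^2*ε/Δ) by linarith)]

end GaussMechAux


/-- `(ε, δ)`-differential privacy for a measure-valued mechanism. -/
def ApproxDPM {D R : Type*} [MeasurableSpace R] (adj : D → D → Prop)
    (M : D → Measure R) (ε δ : ℝ) : Prop :=
  ∀ d d', adj d d' → ∀ S : Set R, MeasurableSet S →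
    M d S ≤ ENNReal.ofReal (Real.exp ε) * M d' S + ENNReal.ofReal δ

/-- Gaussian mechanism: if `f : D → ℝ` has sensitivity at most `Δf` over adjacent
databases, `ε ∈ (0,1)`, `δ > 0`, and `σ ≥ Δf · √(2 ln(1.25/δ)) / ε`, then the mechanism
`d ↦ f(d) + N(0, σ²)` satisfies `(ε, δ)`-differential privacy. -/
theorem gaussian_mechanism {D : Type*} (adj : D → D → Prop)
    (f : D → ℝ) (Δf : ℝ) (hsens : ∀ d d', adj d d' → |f d - f d'| ≤ Δf)
    (ε δ σ : ℝ) (hε0 : 0 < ε) (hε1 : ε < 1) (hδ : 0 < δ)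
    (hσ : σ ≥ Δf * Real.sqrt (2 * Real.log (1.25 / δ)) / ε) :
    ApproxDPM adj (fun d => ProbabilityTheory.gaussianReal (f d) ((σ ^ 2).toNNReal)) ε δ := by
  intro d d' hadj S hS
  show ProbabilityTheory.gaussianReal (f d) ((σ^2).toNNReal) S
    ≤ ENNReal.ofReal (Real.exp ε) * ProbabilityTheory.gaussianReal (f d') ((σ^2).toNNReal) S
      + ENNReal.ofReal δ
  by_cases hδ1 : (1:ℝ) ≤ δ
  · calc ProbabilityTheory.gaussianReal (f d) ((σ^2).toNNReal) S
        ≤ 1 := prob_le_one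
      _ ≤ ENNReal.ofReal δ := by
          rw [← ENNReal.ofReal_one]
          exact ENNReal.ofReal_le_ofReal hδ1
      _ ≤ _ := le_add_self
  push_neg at hδ1
  have hexp1 : (1:ENNReal) ≤ ENNReal.ofReal (Real.exp ε) := by
    rw [← ENNReal.ofReal_one]
    exact ENNReal.ofReal_le_ofReal (Real.one_le_exp hε0.le)
  by_cases heq : f d = f d'
  · rw [heq]
    calc ProbabilityTheory.gaussianReal (f d') ((σ^2).toNNReal) S
        ≤ ENNReal.ofReal (Real.exp ε) * ProbabilityTheory.gaussianReal (f d') ((σ^2).toNNReal) S := by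
          nth_rewrite 1 [← one_mul (ProbabilityTheory.gaussianReal (f d') ((σ^2).toNNReal) S)]
          exact mul_le_mul_left hexp1 _
      _ ≤ _ := le_self_add
  · have hΔa := hsens d d' hadj
    have hΔpos : 0 < Δf := lt_of_lt_of_le (abs_pos.mpr (sub_ne_zero.mpr heq)) hΔa
    have hL : 0 < Real.log (1.25/δ) := Real.log_pos (by rw [lt_div_iff₀ hδ]; linarith)
    have hc : 0 < Real.sqrt (2 * Real.log (1.25/δ)) := Real.sqrt_pos.mpr (by linarith)
    have hσ0 : 0 < σ := lt_of_lt_of_le (by positivity) hσ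
    have hv : ((σ^2).toNNReal) ≠ 0 := by
      simp only [ne_eq, Real.toNNReal_eq_zero, not_le]
      positivity
    have htail : ProbabilityTheory.gaussianReal 0 ((σ^2).toNNReal)
        (Set.Ioi (σ^2*ε/Δf - Δf/2)) ≤ ENNReal.ofReal δ := by
      rw [ProbabilityTheory.gaussianReal_apply_eq_integral 0 hv]
      exact ENNReal.ofReal_le_ofReal
        (GaussMechAux.tail_le_delta σ ε δ Δf hσ0 hε0 hε1 hδ hδ1 hΔpos hσ)
    have hBbound : ProbabilityTheory.gaussianReal (f d) ((σ^2).toNNReal)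
        {x | Real.exp ε * ProbabilityTheory.gaussianPDFReal (f d') ((σ^2).toNNReal) x
          < ProbabilityTheory.gaussianPDFReal (f d) ((σ^2).toNNReal) x} ≤ ENNReal.ofReal δ := by
      rcases lt_or_gt_of_ne heq with hlt | hgt
      · refine le_trans (measure_mono
          (GaussMechAux.B_subset_neg σ ε Δf (f d) (f d') hσ0 hε0 hlt hΔa)) ?_
        rw [GaussMechAux.gauss_shift_lower (f d) _ _ hv]
        exact htail
      · refine le_trans (measure_mono
          (GaussMechAux.B_subset_pos σ ε Δf (f d) (f d') hσ0 hε0 hgt hΔa)) ?_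
        rw [GaussMechAux.gauss_shift (f d) _ _ hv]
        exact htail
    exact le_trans (GaussMechAux.gauss_split (f d) (f d') _ hv ε S)
      (add_le_add_right hBbound _)
end

section
/- Privacy amplification by subsampling: if a mechanism M satisfies ε-differential privacy with ε ≤ 1, then the mechanism that first selects each of the n database entries independently with probability q and then runs M on the subsample satisfies (O(qε), 0)-differential privacy; more precisely it satisfies ε'-DP with ε' = ln(1 + q(e^ε − 1)) ≤ 2qε. -/
open MeasureTheory

/-- `ε`-differential privacy for a measure-valued mechanism. -/
def PureDPM {D R : Type*} [MeasurableSpace R] (adj : D → D → Prop)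
    (M : D → Measure R) (ε : ℝ) : Prop :=
  ∀ d d', adj d d' → ∀ S : Set R, MeasurableSet S →
    M d S ≤ ENNReal.ofReal (Real.exp ε) * M d' S

/-- Sub-databases: entry `i` is `some (d i)` if selected, `none` otherwise;
two sub-databases are adjacent if they differ in at most one entry. -/
def adjSub {X : Type*} {n : ℕ} (e e' : Fin n → Option X) : Prop :=
  ∃ i, ∀ j, j ≠ i → e j = e' j

/-- The distribution of a random subset of `[n]`, encoded as `Fin n → Bool`, where each
index is included independently with probability `q`. -/
noncomputable def bernoulliPi (n : ℕ) (q : ℝ) : Measure (Fin n → Bool) :=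
  Measure.pi (fun _ =>
    ENNReal.ofReal q • Measure.dirac true + ENNReal.ofReal (1 - q) • Measure.dirac false)

/-- The subsampled mechanism: select each entry independently with probability `q`,
then run `M` on the subsample. -/
noncomputable def subsample {X R : Type*} [MeasurableSpace R] {n : ℕ}
    (q : ℝ) (M : (Fin n → Option X) → Measure R) (d : Fin n → X) : Measure R :=
  (bernoulliPi n q).bind (fun b => M (fun i => if b i then some (d i) else none))

section AuxPrivAmp
open ENNReal

private lemma key_real {q e c t t' : ℝ} (hq0 : 0 ≤ q) (hq1 : q ≤ 1)
    (he : 1 ≤ e) (h1 : t ≤ e * c) (h2 : t ≤ e * t') :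
    q * t + (1 - q) * c ≤ (1 + q * (e - 1)) * (q * t' + (1 - q) * c) := by
  have h3 : t ≤ e * min c t' := by
    rcases le_total c t' with h | h
    · rw [min_eq_left h]; exact h1
    · rw [min_eq_right h]; exact h2
  have hm1 : min c t' ≤ c := min_le_left _ _
  have hm2 : min c t' ≤ t' := min_le_right _ _
  have hconv : min c t' ≤ (1 - q) * c + q * t' := by nlinarith
  nlinarith [mul_le_mul_of_nonneg_left h3 hq0,
    mul_le_mul_of_nonneg_left hconv (mul_nonneg hq0 (by linarith : (0:ℝ) ≤ e - 1)),
    mul_le_mul_of_nonneg_left hm2 hq0]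

private lemma exp_sub_one_le {ε : ℝ} (hε0 : 0 < ε) (hε1 : ε ≤ 1) :
    Real.exp ε - 1 ≤ 2 * ε := by
  have h := Real.exp_bound (x := ε) (by rw [abs_of_pos hε0]; exact hε1) (n := 2) (by norm_num)
  rw [abs_of_pos hε0] at h
  have h2 : Real.exp ε - (1 + ε) ≤ ε ^ 2 * (3 / 4) := by
    have := abs_le.1 h
    simp [Finset.sum_range_succ] at this
    nlinarith [this.2]
  nlinarith [sq_nonneg ε]

noncomputable def bw (q : ℝ) : Bool → ℝ≥0∞ :=
  fun x => if x then ENNReal.ofReal q else ENNReal.ofReal (1 - q)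

instance berFin (q : ℝ) : IsFiniteMeasure
    (ENNReal.ofReal q • Measure.dirac true + ENNReal.ofReal (1 - q) • Measure.dirac (false : Bool)) := by
  constructor
  simp only [Measure.add_apply, Measure.smul_apply, smul_eq_mul, measure_univ, mul_one]
  exact ENNReal.add_lt_top.2 ⟨ENNReal.ofReal_lt_top, ENNReal.ofReal_lt_top⟩

lemma ber_singleton (q : ℝ) (x : Bool) :
    (ENNReal.ofReal q • Measure.dirac true + ENNReal.ofReal (1 - q) • Measure.dirac (false : Bool))
      {x} = bw q x := by
  cases x <;> simp [bw, Measure.dirac_apply, Set.indicator]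

lemma bernoulliPi_singleton (n : ℕ) (q : ℝ) (b : Fin n → Bool) :
    bernoulliPi n q {b} = ∏ j, bw q (b j) := by
  rw [bernoulliPi, ← Set.univ_pi_singleton b, Measure.pi_pi]
  exact Finset.prod_congr rfl fun j _ => ber_singleton q (b j)

private lemma key_ennreal {q ε : ℝ} (hq0 : 0 ≤ q) (hq1 : q ≤ 1) (hE1 : 1 ≤ Real.exp ε)
    {T T' C : ℝ≥0∞} (hT'1 : T' ≤ 1) (hC1 : C ≤ 1)
    (h1 : T ≤ ENNReal.ofReal (Real.exp ε) * C)
    (h2 : T ≤ ENNReal.ofReal (Real.exp ε) * T') (P : ℝ≥0∞) :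
    T * (bw q true * P) + C * (bw q false * P)
      ≤ ENNReal.ofReal (1 + q * (Real.exp ε - 1)) *
          (T' * (bw q true * P) + C * (bw q false * P)) := by
  have h1q : (0:ℝ) ≤ 1 - q := by linarith
  have hCne : C ≠ ⊤ := (hC1.trans_lt ENNReal.one_lt_top).ne
  have hT'ne : T' ≠ ⊤ := (hT'1.trans_lt ENNReal.one_lt_top).ne
  have hTne : T ≠ ⊤ :=
    (h1.trans_lt (ENNReal.mul_lt_top ENNReal.ofReal_lt_top (hC1.trans_lt ENNReal.one_lt_top))).ne
  set t := T.toReal with hts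
  set t' := T'.toReal with ht's
  set c := C.toReal with hcs
  have hT : T = ENNReal.ofReal t := (ENNReal.ofReal_toReal hTne).symm
  have hT' : T' = ENNReal.ofReal t' := (ENNReal.ofReal_toReal hT'ne).symm
  have hC : C = ENNReal.ofReal c := (ENNReal.ofReal_toReal hCne).symm
  have he0 : (0:ℝ) ≤ Real.exp ε := le_trans zero_le_one hE1
  have h1' : t ≤ Real.exp ε * c := by
    have := ENNReal.toReal_mono (ENNReal.mul_ne_top ENNReal.ofReal_ne_top hCne) h1
    rwa [ENNReal.toReal_mul, ENNReal.toReal_ofReal he0] at this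
  have h2' : t ≤ Real.exp ε * t' := by
    have := ENNReal.toReal_mono (ENNReal.mul_ne_top ENNReal.ofReal_ne_top hT'ne) h2
    rwa [ENNReal.toReal_mul, ENNReal.toReal_ofReal he0] at this
  have hreal := key_real hq0 hq1 hE1 h1' h2'
  have hbwt : bw q true = ENNReal.ofReal q := rfl
  have hbwf : bw q false = ENNReal.ofReal (1 - q) := rfl
  have hinner : (0:ℝ) ≤ q * t' + (1 - q) * c :=
    add_nonneg (mul_nonneg hq0 ENNReal.toReal_nonneg) (mul_nonneg h1q ENNReal.toReal_nonneg)
  have eL : ENNReal.ofReal (q * t + (1 - q) * c) = T * bw q true + C * bw q false := by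
    rw [ENNReal.ofReal_add (mul_nonneg hq0 ENNReal.toReal_nonneg)
        (mul_nonneg h1q ENNReal.toReal_nonneg),
      ENNReal.ofReal_mul hq0, ENNReal.ofReal_mul h1q,
      ENNReal.ofReal_toReal hTne, ENNReal.ofReal_toReal hCne, hbwt, hbwf]
    ring
  have eR : ENNReal.ofReal (q * t' + (1 - q) * c) = T' * bw q true + C * bw q false := by
    rw [ENNReal.ofReal_add (mul_nonneg hq0 ENNReal.toReal_nonneg)
        (mul_nonneg h1q ENNReal.toReal_nonneg),
      ENNReal.ofReal_mul hq0, ENNReal.ofReal_mul h1q,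
      ENNReal.ofReal_toReal hT'ne, ENNReal.ofReal_toReal hCne, hbwt, hbwf]
    ring
  have hkey : T * bw q true + C * bw q false
      ≤ ENNReal.ofReal (1 + q * (Real.exp ε - 1)) * (T' * bw q true + C * bw q false) := by
    rw [← eL, ← eR, ← ENNReal.ofReal_mul (by nlinarith : (0:ℝ) ≤ 1 + q * (Real.exp ε - 1))]
    exact ENNReal.ofReal_le_ofReal hreal
  calc T * (bw q true * P) + C * (bw q false * P)
      = (T * bw q true + C * bw q false) * P := by ring
    _ ≤ ENNReal.ofReal (1 + q * (Real.exp ε - 1)) * (T' * bw q true + C * bw q false) * P :=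
        mul_le_mul_left hkey P
    _ = _ := by ring

end AuxPrivAmp

/-- Privacy amplification by subsampling: if `M` is `ε`-DP with `ε ≤ 1`, then the
subsampled mechanism is `ε'`-DP with `ε' = ln(1 + q(e^ε − 1))`, and moreover
`ε' ≤ 2qε` (hence the subsampled mechanism is `(O(qε), 0)`-DP). -/
theorem privacy_amplification {X R : Type*} [MeasurableSpace R] {n : ℕ}
    (q ε : ℝ) (hq0 : 0 ≤ q) (hq1 : q ≤ 1) (hε0 : 0 < ε) (hε1 : ε ≤ 1)
    (M : (Fin n → Option X) → Measure R)
    [∀ e, IsProbabilityMeasure (M e)]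
    (hM : PureDPM adjSub M ε) :
    PureDPM (fun d d' : Fin n → X => ∃ i, ∀ j, j ≠ i → d j = d' j)
        (subsample q M) (Real.log (1 + q * (Real.exp ε - 1))) ∧
      Real.log (1 + q * (Real.exp ε - 1)) ≤ 2 * q * ε := by
  classical
  have hE1 : (1:ℝ) ≤ Real.exp ε := Real.one_le_exp hε0.le
  have hα : (0:ℝ) < 1 + q * (Real.exp ε - 1) := by nlinarith
  constructor
  · intro d d' hadj S hS
    obtain ⟨i, hi⟩ := hadj
    simp only [subsample]
    rw [Measure.bind_apply hS Measurable.of_discrete.aemeasurable,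
        Measure.bind_apply hS Measurable.of_discrete.aemeasurable,
        Real.exp_log hα, lintegral_fintype, lintegral_fintype]
    simp_rw [bernoulliPi_singleton]
    set E := Equiv.piSplitAt i (fun _ : Fin n => Bool) with hEdef
    have hsymm_i : ∀ (x : Bool) (r : {j // j ≠ i} → Bool), (E.symm (x, r)) i = x := by
      intro x r
      exact congrArg Prod.fst (E.apply_symm_apply (x, r))
    have hsymm_ne : ∀ (x : Bool) (r : {j // j ≠ i} → Bool) (j) (hj : j ≠ i),
        (E.symm (x, r)) j = r ⟨j, hj⟩ := by
      intro x r j hj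
      simp [hEdef, Equiv.piSplitAt_symm_apply, hj]
    have hsum : ∀ dd : Fin n → X,
        (∑ b : Fin n → Bool,
          (M fun k => if b k then some (dd k) else none) S * ∏ j, bw q (b j))
        = ∑ r : {j // j ≠ i} → Bool,
            ((M fun k => if (E.symm (true, r)) k then some (dd k) else none) S
                * ∏ j, bw q ((E.symm (true, r)) j)
            + (M fun k => if (E.symm (false, r)) k then some (dd k) else none) S
                * ∏ j, bw q ((E.symm (false, r)) j)) := by
      intro dd
      rw [← Equiv.sum_comp E.symm
        (fun b => (M fun k => if b k then some (dd k) else none) S * ∏ j, bw q (b j)),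
        Fintype.sum_prod_type_right]
      exact Finset.sum_congr rfl fun r _ => by rw [Fintype.sum_bool]
    rw [hsum d, hsum d', Finset.mul_sum]
    apply Finset.sum_le_sum
    intro r _
    have hprod : ∀ x : Bool, (∏ j, bw q ((E.symm (x, r)) j))
        = bw q x * ∏ j ∈ ({i}ᶜ : Finset (Fin n)), bw q ((E.symm (true, r)) j) := by
      intro x
      rw [Fintype.prod_eq_mul_prod_compl i, hsymm_i]
      congr 1
      refine Finset.prod_congr rfl fun j hj => ?_
      have hj' : j ≠ i := by simpa using hj
      rw [hsymm_ne x r j hj', hsymm_ne true r j hj']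
    have hdb0 : (fun k => if (E.symm ((false : Bool), r)) k then some (d k) else none)
        = (fun k => if (E.symm ((false : Bool), r)) k then some (d' k) else none) := by
      funext k
      by_cases hk : k = i
      · subst hk; simp [hsymm_i false r]
      · rw [hi k hk]
    have hadj1 : adjSub (fun k => if (E.symm ((true : Bool), r)) k then some (d k) else none)
        (fun k => if (E.symm ((true : Bool), r)) k then some (d' k) else none) :=
      ⟨i, fun j hj => by simp only [hi j hj]⟩
    have hadj2 : adjSub (fun k => if (E.symm ((true : Bool), r)) k then some (d k) else none)
        (fun k => if (E.symm ((false : Bool), r)) k then some (d' k) else none) :=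
      ⟨i, fun j hj => by simp only [hsymm_ne true r j hj, hsymm_ne false r j hj, hi j hj]⟩
    rw [hprod true, hprod false, hdb0]
    exact key_ennreal hq0 hq1 hE1 prob_le_one prob_le_one
      (hM _ _ hadj2 S hS) (hM _ _ hadj1 S hS) _
  · have h1 : Real.log (1 + q * (Real.exp ε - 1)) ≤ q * (Real.exp ε - 1) := by
      have := Real.log_le_sub_one_of_pos hα
      linarith
    have h2 : q * (Real.exp ε - 1) ≤ q * (2 * ε) :=
      mul_le_mul_of_nonneg_left (exp_sub_one_le hε0 hε1) hq0
    linarith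
end
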